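/- arXiv:0806.2923 — 2 statements merged into one kernel-verified Lean document; each statement's English description precedes it below -/
import Mathlib

section
/- If player 1 uses an optimal parity-game winning strategy from a node s in his winning set W_1, then every finite play π in the escape arena starting at s and ending in ⊥ satisfies ℘(π) ≼ ℘̄, where ℘̄ is the ≺-maximal value of an acyclic path ending in ⊥. -/
open scoped Classical

/-- The order `≺` on integer color profiles `ℤ^d`: compare at the largest index where
they differ; at an even index the larger entry wins, at an odd index the smaller one. -/
def FinLt {d : ℕ} (p q : Fin d → ℤ) : Prop :=
  ∃ k : Fin d, p k ≠ q k ∧ (∀ j, k < j → p j = q j) ∧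
    ((Even (k : ℕ) ∧ p k < q k) ∨ (Odd (k : ℕ) ∧ q k < p k))

/-- Reflexive closure `≼` of `FinLt`. -/
def FinLe {d : ℕ} (p q : Fin d → ℤ) : Prop := p = q ∨ FinLt p q

/-- Color profiles: `ℤ^d` together with `-∞` (`bot`) and `∞` (`top`). -/
inductive Prof (d : ℕ) where
  | bot : Prof d
  | fin : (Fin d → ℤ) → Prof d
  | top : Prof d

/-- The order `≺` on color profiles: `-∞` is the bottom element, `∞` the top element,
finite profiles are compared by `FinLt`. -/
def Prof.Lt {d : ℕ} : Prof d → Prof d → Prop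
  | .bot, .bot => False
  | .bot, .fin _ => True
  | .bot, .top => True
  | .fin _, .bot => False
  | .fin p, .fin q => FinLt p q
  | .fin _, .top => True
  | .top, _ => False

/-- Reflexive closure `≼` of `Prof.Lt`. -/
def Prof.Le {d : ℕ} (p q : Prof d) : Prop := p = q ∨ Prof.Lt p q

/-- Adding a vector in `ℤ^d` to a profile; `±∞` are absorbing. -/
def Prof.add {d : ℕ} : Prof d → (Fin d → ℤ) → Prof d
  | .bot, _ => .bot
  | .fin p, q => .fin (p + q)
  | .top, _ => .top

/-- A parity game arena: a finite directed graph, each node owned by player 0 or 1 and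
colored by a color in `{0,…,d-1}`; every node has at least one successor. -/
structure PGA (V : Type) (d : ℕ) where
  edge : V → V → Prop
  owner : V → Fin 2
  color : V → Fin d
  succ : ∀ v, ∃ w, edge v w

variable {V : Type} {d : ℕ}

/-- The profile `℘(s)` of a single vertex: the unit vector at its color. -/
def unitProf (A : PGA V d) (s : V) : Fin d → ℤ := fun k => if A.color s = k then 1 else 0

/-- The color profile `℘(π)` of a finite sequence of vertices: how often each color occurs. -/
def listProf (A : PGA V d) (L : List V) : Fin d → ℤ := fun k => ((L.map A.color).count k : ℤ)

/-- `℘(s) + p` for a vertex `s` and a profile `p`. -/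
def addV (A : PGA V d) (s : V) (p : Prof d) : Prof d := p.add (unitProf A s)

/-- Edges of the escape arena `A_⊥` over `Option V`, where `none` is the sink `⊥`:
all edges of `A`, plus an edge from every player-0 node to `⊥`; `⊥` has no outgoing edges. -/
def EdgeB (A : PGA V d) : Option V → Option V → Prop
  | some u, some v => A.edge u v
  | some u, none => A.owner u = 0
  | none, _ => False

/-- A (memoryless, possibly non-deterministic) strategy of player 0 in `A_⊥`:
a set of player-0 edges giving every player-0 node at least one successor. -/
def Strategy0 (A : PGA V d) (σ : V → Option V → Prop) : Prop :=
  (∀ s t, σ s t → A.owner s = 0 ∧ EdgeB A (some s) t) ∧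
  (∀ s, A.owner s = 0 → ∃ t, σ s t)

/-- A (memoryless, possibly non-deterministic) strategy of player 1 (who never moves to `⊥`). -/
def Strategy1 (A : PGA V d) (τ : V → V → Prop) : Prop :=
  (∀ s t, τ s t → A.owner s = 1 ∧ A.edge s t) ∧
  (∀ s, A.owner s = 1 → ∃ t, τ s t)

/-- A strategy is deterministic if it picks at most one successor per node. -/
def Deterministic (σ : V → Option V → Prop) : Prop :=
  ∀ s t t', σ s t → σ s t' → t = t'

/-- Edges of `A_⊥` restricted to a player-0 strategy `σ` that stay inside `V`
(cycles of `A_⊥|σ` never pass through `⊥`). -/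
def EdgeSig (A : PGA V d) (σ : V → Option V → Prop) (u v : V) : Prop :=
  (A.owner u = 1 ∧ A.edge u v) ∨ σ u (some v)

/-- A (nonempty) cycle in `A_⊥|σ`: consecutive edges plus the wrap-around edge. -/
def CycleIn (A : PGA V d) (σ : V → Option V → Prop) (L : List V) : Prop :=
  L ≠ [] ∧ List.Chain' (EdgeSig A σ) L ∧
  ∀ a b, L.head? = some a → L.getLast? = some b → EdgeSig A σ b a

/-- A player-0 strategy is reasonable if `A_⊥|σ` has no 1-dominated cycle,
i.e. on every cycle the dominating (maximal) color is even. -/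
def Reasonable (A : PGA V d) (σ : V → Option V → Prop) : Prop :=
  ∀ L, CycleIn A σ L → ∀ v ∈ L, (∀ w ∈ L, A.color w ≤ A.color v) → Even ((A.color v : ℕ))

/-- One step of a play in `A_⊥` with player 0 using `σ` and player 1 using `τ`;
the sink `⊥` is absorbing. -/
def PlayStep (A : PGA V d) (σ : V → Option V → Prop) (τ : V → V → Prop) :
    Option V → Option V → Prop
  | none, y => y = none
  | some u, y => (A.owner u = 0 ∧ σ u y) ∨ (A.owner u = 1 ∧ ∃ v, y = some v ∧ τ u v)

/-- A play from `s` in `A_⊥|σ,τ` (modelled with absorbing sink). -/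
def IsPlay (A : PGA V d) (σ : V → Option V → Prop) (τ : V → V → Prop)
    (s : V) (π : ℕ → Option V) : Prop :=
  π 0 = some s ∧ ∀ n, PlayStep A σ τ (π n) (π (n + 1))

/-- One step of a play in `A_⊥` with player 0 using `σ`, player 1 unconstrained. -/
def PlayStepB (A : PGA V d) (σ : V → Option V → Prop) : Option V → Option V → Prop
  | none, y => y = none
  | some u, y => (A.owner u = 0 ∧ σ u y) ∨ (A.owner u = 1 ∧ ∃ v, y = some v ∧ A.edge u v)

/-- A play from `s` in `A_⊥|σ` against an arbitrary player 1. -/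
def IsPlayB (A : PGA V d) (σ : V → Option V → Prop) (s : V) (π : ℕ → Option V) : Prop :=
  π 0 = some s ∧ ∀ n, PlayStepB A σ (π n) (π (n + 1))

/-- Color `k` occurs at position `n` of the play `π`. -/
def ColorAt (A : PGA V d) (π : ℕ → Option V) (n : ℕ) (k : Fin d) : Prop :=
  ∃ v, π n = some v ∧ A.color v = k

/-- An infinite play of `A_⊥` (never reaching `⊥`) is won by player 0 iff the maximal color
occurring infinitely often is even. -/
def Won0B (A : PGA V d) (π : ℕ → Option V) : Prop :=
  ∃ k : Fin d, Even ((k : ℕ)) ∧ (∀ N, ∃ n ≥ N, ColorAt A π n k) ∧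
    ∀ j : Fin d, k < j → ∃ N, ∀ n ≥ N, ¬ ColorAt A π n j

/-- The value `℘(π)` of a play in `A_⊥`: for a finite play (reaching `⊥`), the color profile
of its vertices; for an infinite play, `∞` if player 0 wins it and `-∞` otherwise. -/
noncomputable def PlayValue (A : PGA V d) (π : ℕ → Option V) : Prof d :=
  if h : ∃ n, π n = none then
    .fin (fun k =>
      (((Finset.range (Nat.find h)).filter (fun n => ColorAt A π n k)).card : ℤ))
  else if Won0B A π then .top else .bot

/-- `p` is the `≺`-maximum of the set `S` of profiles. -/
def IsMaxOf {d : ℕ} (S : Set (Prof d)) (p : Prof d) : Prop := p ∈ S ∧ ∀ q ∈ S, Prof.Le q p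

/-- `p` is the `≺`-minimum of the set `S` of profiles. -/
def IsMinOf {d : ℕ} (S : Set (Prof d)) (p : Prof d) : Prop := p ∈ S ∧ ∀ q ∈ S, Prof.Le p q

/-- `W` is the valuation `𝒱_σ` of the player-0 strategy `σ`: `W(⊥) = ō`, and `W(s)` is the
`≺`-minimal value player 1 can guarantee (by a memoryless strategy) in any play from `s`
in `A_⊥|σ`. -/
def IsValuation (A : PGA V d) (σ : V → Option V → Prop) (W : Option V → Prof d) : Prop :=
  W none = .fin 0 ∧
  ∀ s : V, IsMinOf
    { p | ∃ τ, Strategy1 A τ ∧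
        IsMaxOf { q | ∃ π, IsPlay A σ τ s π ∧ q = PlayValue A π } p }
    (W (some s))

/-- `(s,t)` is an improvement of `σ` w.r.t. the valuation `W`: a player-0 edge with
`W(s) ≼ ℘(s) + W(t)`.  `I_σ` is the set (strategy) of all improvements. -/
def Improvement (A : PGA V d) (W : Option V → Prof d) (s : V) (t : Option V) : Prop :=
  A.owner s = 0 ∧ EdgeB A (some s) t ∧ Prof.Le (W (some s)) (addV A s (W t))

/-- `(s,t)` is a strict improvement of `σ` w.r.t. `W`: a player-0 edge with
`W(s) ≺ ℘(s) + W(t)`. -/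
def StrictImp (A : PGA V d) (W : Option V → Prof d) (s : V) (t : Option V) : Prop :=
  A.owner s = 0 ∧ EdgeB A (some s) t ∧ Prof.Lt (W (some s)) (addV A s (W t))

/-- A memoryless strategy of player 0 in the original parity game arena `A`. -/
def Strat0A (A : PGA V d) (σ : V → V → Prop) : Prop :=
  (∀ s t, σ s t → A.owner s = 0 ∧ A.edge s t) ∧ (∀ s, A.owner s = 0 → ∃ t, σ s t)

/-- A play in `A` from `s` where player 0 follows `σ` and player 1 is unconstrained. -/
def PlayA (A : PGA V d) (σ : V → V → Prop) (s : V) (π : ℕ → V) : Prop :=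
  π 0 = s ∧ ∀ n, (A.owner (π n) = 0 → σ (π n) (π (n + 1))) ∧
    (A.owner (π n) = 1 → A.edge (π n) (π (n + 1)))

/-- Parity winning condition in `A` for player 0: the maximal color seen infinitely often is even. -/
def Won0A (A : PGA V d) (π : ℕ → V) : Prop :=
  ∃ k : Fin d, Even ((k : ℕ)) ∧ (∀ N, ∃ n ≥ N, A.color (π n) = k) ∧
    ∀ j : Fin d, k < j → ∃ N, ∀ n ≥ N, A.color (π n) ≠ j

/-- Player 0 wins the node `s` of the parity game arena `A` (with a memoryless strategy). -/
def Win0 (A : PGA V d) (s : V) : Prop :=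
  ∃ σ, Strat0A A σ ∧ ∀ π, PlayA A σ s π → Won0A A π

/-- An acyclic path of `A_⊥` terminating in `⊥`: pairwise distinct vertices, consecutive
edges of `A`, and the last vertex owned by player 0 (so it has the edge to `⊥`). -/
def AcyclicToBot (A : PGA V d) (L : List V) : Prop :=
  L.Nodup ∧ List.Chain' A.edge L ∧ ∀ b, L.getLast? = some b → A.owner b = 0


/-- Auxiliary lemmas added for the proof. -/
private lemma finLt_trans' {d : ℕ} {p q r : Fin d → ℤ} (h1 : FinLt p q) (h2 : FinLt q r) :
    FinLt p r := by
  obtain ⟨k1, hne1, hab1, hs1⟩ := h1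
  obtain ⟨k2, hne2, hab2, hs2⟩ := h2
  rcases lt_trichotomy k1 k2 with h | h | h
  · refine ⟨k2, ?_, fun j hj => ?_, ?_⟩
    · rw [hab1 k2 h]; exact hne2
    · rw [hab1 j (h.trans hj), hab2 j hj]
    · rw [hab1 k2 h]; exact hs2
  · subst h
    have hab : ∀ j, k1 < j → p j = r j := fun j hj => (hab1 j hj).trans (hab2 j hj)
    rcases hs1 with ⟨he, h1⟩ | ⟨ho, h1⟩ <;> rcases hs2 with ⟨he', h2⟩ | ⟨ho', h2⟩
    · exact ⟨k1, by omega, hab, Or.inl ⟨he, h1.trans h2⟩⟩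
    · exact absurd he (Nat.not_even_iff_odd.mpr ho')
    · exact absurd he' (Nat.not_even_iff_odd.mpr ho)
    · exact ⟨k1, by omega, hab, Or.inr ⟨ho, h2.trans h1⟩⟩
  · refine ⟨k1, ?_, fun j hj => ?_, ?_⟩
    · rw [← hab2 k1 h]; exact hne1
    · rw [hab1 j hj, hab2 j (h.trans hj)]
    · rw [← hab2 k1 h]; exact hs1

private lemma finLe_trans' {d : ℕ} {p q r : Fin d → ℤ} (h1 : FinLe p q) (h2 : FinLe q r) :
    FinLe p r := by
  rcases h1 with rfl | h1
  · exact h2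
  rcases h2 with rfl | h2
  · exact Or.inr h1
  · exact Or.inr (finLt_trans' h1 h2)

private lemma finLt_add_left' {d : ℕ} {p q : Fin d → ℤ} (r : Fin d → ℤ) (h : FinLt p q) :
    FinLt (r + p) (r + q) := by
  obtain ⟨k, hne, hab, hs⟩ := h
  refine ⟨k, by simpa using fun e => hne (by omega), fun j hj => by simp [hab j hj], ?_⟩
  rcases hs with ⟨he, h1⟩ | ⟨ho, h1⟩
  · exact Or.inl ⟨he, by simpa using h1⟩
  · exact Or.inr ⟨ho, by simpa using h1⟩

/-- The step relation of a play consistent with the player-1 strategy `τ`. -/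
private def StepRel {V : Type} {d : ℕ} (A : PGA V d) (τ : V → V → Prop) (u v : V) : Prop :=
  (A.owner u = 0 ∧ A.edge u v) ∨ (A.owner u = 1 ∧ τ u v)

/-- If player 1 uses a (memoryless) parity-game winning strategy `τ`
from a node `s` in his winning set, then every finite play in the escape arena starting
at `s`, consistent with `τ`, and ending in `⊥` has profile `≼ ℘̄`, the `≺`-maximal value
of an acyclic path ending in `⊥`. -/
theorem player1_winning_strategy_bounds_escape {V : Type} {d : ℕ} [Fintype V]
    (A : PGA V d) (pbar : Fin d → ℤ)
    (hmem : ∃ L, AcyclicToBot A L ∧ listProf A L = pbar)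
    (hmax : ∀ L, AcyclicToBot A L → FinLe (listProf A L) pbar)
    (τ : V → V → Prop) (s : V)
    (hτ : Strategy1 A τ)
    (hwin : ∀ π : ℕ → V,
      (π 0 = s ∧ ∀ n, (A.owner (π n) = 0 → A.edge (π n) (π (n + 1))) ∧
        (A.owner (π n) = 1 → τ (π n) (π (n + 1)))) → ¬ Won0A A π)
    (L : List V) (hne : L ≠ []) (hhead : L.head? = some s)
    (hchain : List.Chain'
      (fun u v => (A.owner u = 0 ∧ A.edge u v) ∨ (A.owner u = 1 ∧ τ u v)) L)
    (hlast : ∀ b, L.getLast? = some b → A.owner b = 0) :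
    FinLe (listProf A L) pbar := by
  classical
  have hchainR : List.Chain' (StepRel A τ) L := hchain
  clear hchain
  -- ============ the cycle lemma ============
  have cyc : ∀ (M : List V), M.head? = some s → List.Chain' (StepRel A τ) M →
      ∀ (i j : ℕ) (hij : i < j) (hj : j < M.length),
      M.get ⟨i, by omega⟩ = M.get ⟨j, hj⟩ →
      FinLt (listProf A ((M.drop i).take (j - i))) 0 := by
    intro M hheadM hchainM i j hij hj hgetij
    have hlt : ∀ (m : ℕ) (h : m < M.length - 1),
        StepRel A τ (M.get ⟨m, by omega⟩) (M.get ⟨m + 1, by omega⟩) := by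
      intro m h
      exact List.isChain_iff_getElem.mp hchainM m (by omega)
    have hlenpos : 0 < j - i := by omega
    set len := j - i with hlendef
    let f : ℕ → ℕ := fun n => if n < i then n else i + (n - i) % len
    have hfl : ∀ n, f n < M.length := by
      intro n
      show (if n < i then n else i + (n - i) % len) < M.length
      split
      · omega
      · have := Nat.mod_lt (n - i) hlenpos; omega
    let π : ℕ → V := fun n => M.get ⟨f n, hfl n⟩
    have hgc : ∀ (a b : ℕ) (ha : a < M.length) (hb : b < M.length), a = b →
        M.get ⟨a, ha⟩ = M.get ⟨b, hb⟩ := by rintro a b ha hb rfl; rfl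
    have hfval : ∀ n, i ≤ n → f n = i + (n - i) % len := fun n hn => if_neg (by omega)
    have hfval' : ∀ n, n < i → f n = n := fun n hn => if_pos hn
    have hπget : ∀ (m : ℕ), i ≤ m → ∀ h2 : m < j, π m = M.get ⟨m, by omega⟩ := by
      intro m h1 h2
      exact hgc _ _ _ _ (by rw [hfval m h1, Nat.mod_eq_of_lt (by omega)]; omega)
    have hstep : ∀ n, StepRel A τ (π n) (π (n + 1)) := by
      intro n
      by_cases hn : n < i
      · have h1 : f n = n := hfval' n hn
        have h2 : f (n + 1) = n + 1 := by
          by_cases hn1 : n + 1 < i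
          · exact hfval' _ hn1
          · rw [hfval _ (by omega)]
            have hni : n + 1 = i := by omega
            simp [hni]
        have hR := hlt n (by omega)
        show StepRel A τ (M.get ⟨f n, hfl n⟩) (M.get ⟨f (n + 1), hfl (n + 1)⟩)
        rwa [hgc (f n) n _ (by omega) h1, hgc (f (n + 1)) (n + 1) _ (by omega) h2]
      · have hn' : i ≤ n := by omega
        have h1 : f n = i + (n - i) % len := hfval n hn'
        set r := (n - i) % len with hr
        have hrlt : r < len := Nat.mod_lt _ hlenpos
        have hq := Nat.div_add_mod (n - i) len
        have hmod1 : (n + 1 - i) % len = (r + 1) % len := by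
          have he : n + 1 - i = r + 1 + len * ((n - i) / len) := by omega
          rw [he, Nat.add_mul_mod_self_left]
        by_cases hrl : r + 1 < len
        · have h2 : f (n + 1) = i + r + 1 := by
            rw [hfval _ (by omega), hmod1, Nat.mod_eq_of_lt hrl]; omega
          have hR := hlt (i + r) (by omega)
          show StepRel A τ (M.get ⟨f n, hfl n⟩) (M.get ⟨f (n + 1), hfl (n + 1)⟩)
          rwa [hgc (f n) (i + r) _ (by omega) h1,
               hgc (f (n + 1)) (i + r + 1) _ (by omega) h2]
        · have h2 : f (n + 1) = i := by
            rw [hfval _ (by omega), hmod1]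
            have he : r + 1 = len := by omega
            simp [he]
          have hR := hlt (j - 1) (by omega)
          have hR' : StepRel A τ (M.get ⟨j - 1, by omega⟩) (M.get ⟨i, by omega⟩) := by
            have he : j - 1 + 1 = j := by omega
            rwa [hgc (j - 1 + 1) j (by omega) hj he, ← hgetij] at hR
          show StepRel A τ (M.get ⟨f n, hfl n⟩) (M.get ⟨f (n + 1), hfl (n + 1)⟩)
          rwa [hgc (f n) (j - 1) _ (by omega) (by omega),
               hgc (f (n + 1)) i _ (by omega) h2]
      -- f n = i + r = j - 1 since r + 1 = len
    have hπ0 : π 0 = s := by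
      have h0 : f 0 = 0 := by
        by_cases h : 0 < i
        · exact hfval' 0 h
        · have hi : i = 0 := by omega
          rw [hfval 0 (by omega)]; simp [hi]
      have hlen0 : 0 < M.length := by omega
      have hg0 : M.get ⟨0, hlen0⟩ = s := by
        cases M with
        | nil => simp at hlen0
        | cons a t => simpa using hheadM
      rw [show π 0 = M.get ⟨0, hlen0⟩ from hgc _ _ _ _ h0]
      exact hg0
    have hplay : ¬ Won0A A π := by
      apply hwin
      refine ⟨hπ0, fun n => ?_⟩
      rcases hstep n with ⟨h0, he⟩ | ⟨h1, ht⟩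
      · exact ⟨fun _ => he, fun h => by rw [h0] at h; exact absurd h (by decide)⟩
      · exact ⟨fun h => by rw [h1] at h; exact absurd h (by decide), fun _ => ht⟩
    obtain ⟨m0, hm0mem, hm0max⟩ := Finset.exists_max_image (Finset.Ico i j)
      (fun m => A.color (π m)) ⟨i, Finset.mem_Ico.mpr ⟨le_refl i, hij⟩⟩
    rw [Finset.mem_Ico] at hm0mem
    set k := A.color (π m0) with hk
    have hboundcol : ∀ n, i ≤ n → A.color (π n) ≤ k := by
      intro n hn
      have hrlt : (n - i) % len < len := Nat.mod_lt _ hlenpos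
      have hpp : π n = π (i + (n - i) % len) := by
        show M.get ⟨f n, _⟩ = M.get ⟨f (i + (n - i) % len), _⟩
        apply hgc
        rw [hfval n hn, hfval _ (by omega), Nat.add_sub_cancel_left,
            Nat.mod_eq_of_lt hrlt]
      rw [hpp]
      exact hm0max _ (Finset.mem_Ico.mpr ⟨by omega, by omega⟩)
    have hperiod : ∀ t : ℕ, π (m0 + t * len) = π m0 := by
      intro t
      show M.get ⟨f (m0 + t * len), _⟩ = M.get ⟨f m0, _⟩
      apply hgc
      rw [hfval _ (by omega), hfval m0 hm0mem.1]
      congr 1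
      have he : m0 + t * len - i = (m0 - i) + len * t := by
        have := hm0mem.1
        rw [Nat.mul_comm len t]; omega
      rw [he, Nat.add_mul_mod_self_left]
    have hodd : Odd (k : ℕ) := by
      rw [← Nat.not_even_iff_odd]
      intro heven
      apply hplay
      refine ⟨k, heven, fun N => ⟨m0 + N * len, ?_, ?_⟩, fun j' hj' => ⟨i, fun n hn hc => ?_⟩⟩
      · have hNl : N ≤ N * len := Nat.le_mul_of_pos_right N hlenpos
        omega
      · rw [hperiod N]
      · have hb := hboundcol n hn
        rw [hc] at hb
        exact absurd hj' (not_lt.mpr hb)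
    have hClen : ((M.drop i).take len).length = len := by
      rw [List.length_take, List.length_drop]; omega
    have hCget : ∀ (m : ℕ) (hm : m < len),
        ((M.drop i).take len).get ⟨m, by omega⟩ = M.get ⟨i + m, by omega⟩ := by
      intro m hm
      simp only [List.get_eq_getElem, List.getElem_take, List.getElem_drop]
    have hmem_k : k ∈ ((M.drop i).take len).map A.color := by
      refine List.mem_map.mpr ⟨((M.drop i).take len).get ⟨m0 - i, by omega⟩,
        List.get_mem _ _, ?_⟩
      rw [hCget (m0 - i) (by omega)]
      rw [hgc (i + (m0 - i)) m0 (by omega) (by omega) (by omega)]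
      rw [hk, hπget m0 hm0mem.1 hm0mem.2]
    have hcount_pos : 0 < (((M.drop i).take len).map A.color).count k :=
      List.count_pos_iff.mpr hmem_k
    have hcolbound : ∀ v ∈ (M.drop i).take len, A.color v ≤ k := by
      intro v hv
      obtain ⟨⟨m, hm⟩, rfl⟩ := List.mem_iff_get.mp hv
      rw [hCget m (by omega)]
      have hb := hboundcol (i + m) (by omega)
      rwa [hπget (i + m) (by omega) (by rw [hClen] at hm; omega)] at hb
    refine ⟨k, ?_, ?_, Or.inr ⟨hodd, ?_⟩⟩
    · simp only [listProf, Pi.zero_apply]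
      exact Int.natCast_ne_zero.mpr (by omega)
    · intro j' hj'
      simp only [listProf, Pi.zero_apply]
      rw [List.count_eq_zero.mpr, Int.natCast_zero]
      intro hmem'
      obtain ⟨v, hv, hcv⟩ := List.mem_map.mp hmem'
      have := hcolbound v hv
      rw [hcv] at this
      exact absurd hj' (not_lt.mpr this)
    · simp only [listProf, Pi.zero_apply]
      exact_mod_cast hcount_pos
  -- ============ the induction ============
  have keyind : ∀ n (M : List V), M.length = n → M ≠ [] → M.head? = some s →
      List.Chain' (StepRel A τ) M → (∀ b, M.getLast? = some b → A.owner b = 0) →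
      FinLe (listProf A M) pbar := by
    intro n
    induction n using Nat.strong_induction_on with
    | _ n ih =>
      intro M hlen hneM hheadM hchainM hlastM
      by_cases hnd : M.Nodup
      · refine hmax M ⟨hnd, ?_, hlastM⟩
        exact hchainM.imp (fun u v h => h.elim (fun h => h.2) (fun h => (hτ.1 u v h.2).2))
      · have main : ∀ (i j : ℕ) (hij : i < j) (hj : j < M.length),
            M.get ⟨i, by omega⟩ = M.get ⟨j, hj⟩ → FinLe (listProf A M) pbar := by
          intro i j hij hj hgetij
          have hcycC := cyc M hheadM hchainM i j hij hj hgetij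
          have hdecomp : M.take i ++ ((M.drop i).take (j - i) ++ M.drop j) = M := by
            rw [show M.drop j = (M.drop i).drop (j - i) by
                  rw [List.drop_drop]; congr 1; omega,
                List.take_append_drop, List.take_append_drop]
          have hgetij? : M[i]? = M[j]? := by
            rw [List.getElem?_eq_getElem (show i < M.length by omega),
                List.getElem?_eq_getElem hj]
            exact congrArg some (by simpa [List.get_eq_getElem] using hgetij)
          have hDne : M.drop j ≠ [] := by
            intro h
            have := congrArg List.length h
            simp only [List.length_drop, List.length_nil] at this
            omega
          have hL'ne : M.take i ++ M.drop j ≠ [] := by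
            intro h
            rw [List.append_eq_nil_iff] at h
            exact hDne h.2
          have hheadD : (M.drop j).head? = M[j]? := List.head?_drop
          have hheadL' : (M.take i ++ M.drop j).head? = some s := by
            rw [List.head?_append]
            by_cases hi0 : i = 0
            · subst hi0
              simp only [List.take_zero, List.head?_nil, Option.none_or]
              rw [hheadD, ← hgetij?, ← List.head?_eq_getElem?]
              exact hheadM
            · rw [List.head?_eq_getElem? (l := M.take i), List.getElem?_take,
                  if_pos (by omega), ← List.head?_eq_getElem?, hheadM]
              rfl
          have hlastL' : (M.take i ++ M.drop j).getLast? = M.getLast? := by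
            rw [List.getLast?_append]
            have h1 : (M.drop j).getLast? = M.getLast? := by
              rw [List.getLast?_eq_getElem?, List.getLast?_eq_getElem? (l := M),
                  List.getElem?_drop, List.length_drop]
              congr 1
              omega
            rw [h1]
            obtain ⟨b', hb'⟩ := Option.isSome_iff_exists.mp
              (List.getLast?_isSome.mpr hneM)
            rw [hb']
            rfl
          have hchain'' := hchainM
          unfold List.Chain' at hchain''
          rw [← hdecomp, List.isChain_append, List.isChain_append] at hchain''
          obtain ⟨hcP, ⟨hcC, hcD, hlinkCD⟩, hlinkP⟩ := hchain''
          have hheadC : (((M.drop i).take (j - i))).head? = M[i]? := by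
            rw [List.head?_eq_getElem?, List.getElem?_take, if_pos (by omega),
                List.getElem?_drop]
            norm_num
          have hchainL' : List.Chain' (StepRel A τ) (M.take i ++ M.drop j) := by
            unfold List.Chain'
            rw [List.isChain_append]
            refine ⟨hcP, hcD, fun x hx y hy => ?_⟩
            apply hlinkP x hx
            have hh : (((M.drop i).take (j - i)) ++ M.drop j).head? = M[j]? := by
              rw [List.head?_append, hheadC, hgetij?, List.getElem?_eq_getElem hj]
              rfl
            rw [hh]
            rwa [hheadD] at hy
          have hlenlt : (M.take i ++ M.drop j).length < n := by
            rw [List.length_append, List.length_take, List.length_drop]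
            omega
          have ihres := ih _ hlenlt (M.take i ++ M.drop j) rfl hL'ne hheadL' hchainL'
            (fun b hb => hlastM b (by rw [hlastL'] at hb; exact hb))
          have hprof : listProf A M =
              listProf A (M.take i ++ M.drop j) + listProf A ((M.drop i).take (j - i)) := by
            funext c
            simp only [listProf, Pi.add_apply]
            conv_lhs => rw [← hdecomp]
            simp only [List.map_append, List.count_append]
            push_cast
            ring
          have hfin : FinLt (listProf A M) (listProf A (M.take i ++ M.drop j)) := by
            rw [hprof]
            have hh := finLt_add_left' (listProf A (M.take i ++ M.drop j)) hcycC
            simpa using hh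
          exact finLe_trans' (Or.inr hfin) ihres
        rw [List.nodup_iff_injective_get] at hnd
        obtain ⟨a, b, hab, hneab⟩ := Function.not_injective_iff.mp hnd
        rcases lt_or_gt_of_ne hneab with h | h
        · exact main a b h b.isLt hab
        · exact main b a h a.isLt hab.symm
  exact keyind _ L rfl hne hhead hchainR hlast
end

section
/- For a reasonable strategy σ, the valuation V_σ is the limit of the decreasing sequence F_σ^i[V_⊥] (where V_⊥(⊥) = ō and V_⊥(s) = ∞ for s ∈ V), and this limit is reached after at most |V| iterations. -/
open scoped Classical

variable {V : Type} {d : ℕ}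

/-- The Bellman-style operator `F_σ`, given as a relation between a valuation `W` and its
image `FW`: `F_σ[W](⊥) = ō`; at a player-1 node, `℘(s)` plus the `≼`-minimum over
`E_1`-successors; at a player-0 node, `℘(s)` plus the `≼`-maximum over `σ`-successors. -/
def IsStep {V : Type} {d : ℕ} (A : PGA V d) (σ : V → Option V → Prop)
    (W FW : Option V → Prof d) : Prop :=
  FW none = .fin 0 ∧
  ∀ s : V,
    (A.owner s = 1 → ∃ m, IsMinOf { p | ∃ t, A.edge s t ∧ p = W (some t) } m ∧
      FW (some s) = addV A s m) ∧
    (A.owner s = 0 → ∃ m, IsMaxOf { p | ∃ t, σ s t ∧ p = W t } m ∧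
      FW (some s) = addV A s m)


/-! ### Auxiliary order lemmas -/

section OrderAux
variable {d : ℕ}

lemma finlt_irrefl (p : Fin d → ℤ) : ¬ FinLt p p := by
  rintro ⟨k, hne, -, -⟩; exact hne rfl

lemma finlt_add_right {p q : Fin d → ℤ} (r : Fin d → ℤ) (h : FinLt p q) :
    FinLt (p + r) (q + r) := by
  obtain ⟨k, hne, hup, hc⟩ := h
  refine ⟨k, by simpa using hne, fun j hj => by simp [hup j hj], ?_⟩
  rcases hc with ⟨he, hlt⟩ | ⟨ho, hlt⟩
  · exact Or.inl ⟨he, by simpa using hlt⟩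
  · exact Or.inr ⟨ho, by simpa using hlt⟩

lemma finlt_trans {p q r : Fin d → ℤ} (h1 : FinLt p q) (h2 : FinLt q r) : FinLt p r := by
  obtain ⟨k1, h1ne, h1up, h1c⟩ := h1
  obtain ⟨k2, h2ne, h2up, h2c⟩ := h2
  rcases lt_trichotomy k1 k2 with hlt | heq | hgt
  · have e : p k2 = q k2 := h1up k2 hlt
    refine ⟨k2, by rw [e]; exact h2ne,
      fun j hj => (h1up j (hlt.trans hj)).trans (h2up j hj), ?_⟩
    rcases h2c with ⟨hev, h⟩ | ⟨hod, h⟩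
    · exact Or.inl ⟨hev, by rw [e]; exact h⟩
    · exact Or.inr ⟨hod, by rw [e]; exact h⟩
  · subst heq
    refine ⟨k1, ?_, fun j hj => (h1up j hj).trans (h2up j hj), ?_⟩
    · rcases h1c with ⟨hev, h⟩ | ⟨hod, h⟩
      · rcases h2c with ⟨_, h'⟩ | ⟨hod', _⟩
        · exact ne_of_lt (h.trans h')
        · exact absurd hev (Nat.not_even_iff_odd.mpr hod')
      · rcases h2c with ⟨hev', _⟩ | ⟨_, h'⟩
        · exact absurd hev' (Nat.not_even_iff_odd.mpr hod)
        · exact (ne_of_lt (h'.trans h)).symm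
    · rcases h1c with ⟨hev, h⟩ | ⟨hod, h⟩
      · rcases h2c with ⟨_, h'⟩ | ⟨hod', _⟩
        · exact Or.inl ⟨hev, h.trans h'⟩
        · exact absurd hev (Nat.not_even_iff_odd.mpr hod')
      · rcases h2c with ⟨hev', _⟩ | ⟨_, h'⟩
        · exact absurd hev' (Nat.not_even_iff_odd.mpr hod)
        · exact Or.inr ⟨hod, h'.trans h⟩
  · have e : q k1 = r k1 := h2up k1 hgt
    refine ⟨k1, by rw [← e]; exact h1ne,
      fun j hj => (h1up j hj).trans (h2up j (hgt.trans hj)), ?_⟩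
    rcases h1c with ⟨hev, h⟩ | ⟨hod, h⟩
    · exact Or.inl ⟨hev, by rw [← e]; exact h⟩
    · exact Or.inr ⟨hod, by rw [← e]; exact h⟩

lemma finlt_total {p q : Fin d → ℤ} (h : p ≠ q) : FinLt p q ∨ FinLt q p := by
  have hex : ∃ k, p k ≠ q k := by
    by_contra hc; push_neg at hc; exact h (funext hc)
  obtain ⟨k0, hk0⟩ := hex
  set S : Finset (Fin d) := Finset.univ.filter (fun k => p k ≠ q k) with hS
  have hne : S.Nonempty := ⟨k0, by simp [hS, hk0]⟩
  set k := S.max' hne with hk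
  have hkS : k ∈ S := S.max'_mem hne
  have hkne : p k ≠ q k := by simpa [hS] using hkS
  have hup : ∀ j, k < j → p j = q j := by
    intro j hj
    by_contra hne'
    have hjS : j ∈ S := by simp [hS, hne']
    exact absurd (S.le_max' j hjS) (not_le.mpr hj)
  rcases Nat.even_or_odd (k : ℕ) with he | ho
  · rcases lt_or_gt_of_ne hkne with hlt | hgt
    · exact Or.inl ⟨k, hkne, hup, Or.inl ⟨he, hlt⟩⟩
    · exact Or.inr ⟨k, hkne.symm, fun j hj => (hup j hj).symm, Or.inl ⟨he, hgt⟩⟩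
  · rcases lt_or_gt_of_ne hkne with hlt | hgt
    · exact Or.inr ⟨k, hkne.symm, fun j hj => (hup j hj).symm, Or.inr ⟨ho, hlt⟩⟩
    · exact Or.inl ⟨k, hkne, hup, Or.inr ⟨ho, hgt⟩⟩

lemma plt_irrefl (p : Prof d) : ¬ Prof.Lt p p := by
  cases p <;> simp [Prof.Lt, finlt_irrefl]

lemma plt_trans {p q r : Prof d} (h1 : Prof.Lt p q) (h2 : Prof.Lt q r) : Prof.Lt p r := by
  cases p <;> cases q <;> cases r <;>
    simp_all [Prof.Lt] <;> exact finlt_trans h1 h2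

lemma ple_refl (p : Prof d) : Prof.Le p p := Or.inl rfl

lemma ple_of_lt {p q : Prof d} (h : Prof.Lt p q) : Prof.Le p q := Or.inr h

lemma ple_trans {p q r : Prof d} (h1 : Prof.Le p q) (h2 : Prof.Le q r) : Prof.Le p r := by
  rcases h1 with rfl | h1
  · exact h2
  rcases h2 with rfl | h2
  · exact Or.inr h1
  · exact Or.inr (plt_trans h1 h2)

lemma ple_antisymm {p q : Prof d} (h1 : Prof.Le p q) (h2 : Prof.Le q p) : p = q := by
  rcases h1 with rfl | h1
  · rfl
  rcases h2 with rfl | h2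
  · rfl
  · exact absurd (plt_trans h1 h2) (plt_irrefl p)

lemma ple_top (p : Prof d) : Prof.Le p Prof.top := by
  cases p <;> simp [Prof.Le, Prof.Lt]

lemma bot_ple (p : Prof d) : Prof.Le Prof.bot p := by
  cases p <;> simp [Prof.Le, Prof.Lt]

lemma ple_total (p q : Prof d) : Prof.Le p q ∨ Prof.Le q p := by
  by_cases h : p = q
  · exact Or.inl (Or.inl h)
  cases p with
  | bot => exact Or.inl (bot_ple _)
  | top => exact Or.inr (ple_top _)
  | fin a =>
    cases q with
    | bot => exact Or.inr (bot_ple _)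
    | top => exact Or.inl (ple_top _)
    | fin b =>
      have hab : a ≠ b := fun e => h (by rw [e])
      rcases finlt_total hab with h' | h'
      · exact Or.inl (Or.inr h')
      · exact Or.inr (Or.inr h')

lemma top_ple {p : Prof d} (h : Prof.Le Prof.top p) : p = Prof.top := by
  rcases h with rfl | h
  · rfl
  · cases p <;> simp [Prof.Lt] at h

lemma padd_zero (p : Prof d) : p.add 0 = p := by
  cases p <;> simp [Prof.add]

lemma padd_padd (p : Prof d) (a b : Fin d → ℤ) : (p.add a).add b = p.add (a + b) := by
  cases p <;> simp [Prof.add, add_assoc]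

lemma padd_mono {p q : Prof d} (r : Fin d → ℤ) (h : Prof.Le p q) :
    Prof.Le (p.add r) (q.add r) := by
  rcases h with rfl | h
  · exact ple_refl _
  cases p with
  | bot => exact bot_ple _
  | top => cases q <;> simp_all [Prof.Lt]
  | fin a =>
    cases q with
    | bot => simp_all [Prof.Lt]
    | top => exact ple_top _
    | fin b =>
      simp only [Prof.Lt] at h
      exact Or.inr (by simpa [Prof.add, Prof.Lt] using finlt_add_right r h)

lemma padd_ne_bot {p : Prof d} (h : p ≠ .bot) (r : Fin d → ℤ) : p.add r ≠ .bot := by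
  cases p <;> simp_all [Prof.add]

lemma plt_fin_add {v C : Fin d → ℤ} (h : FinLt 0 C) :
    Prof.Lt (Prof.fin v) (Prof.fin (v + C)) := by
  have h2 : FinLt v (C + v) := by simpa using finlt_add_right v h
  rw [add_comm v C]
  exact h2

lemma owner_cases (x : Fin 2) : x = 0 ∨ x = 1 := by omega

end OrderAux

/-! ### Play infrastructure -/

section PlayAux
variable {V : Type} {d : ℕ}

/-- Color counts of the first `k` positions of a play. -/
noncomputable def cnt (A : PGA V d) (π : ℕ → Option V) (k : ℕ) : Fin d → ℤ :=
  fun c => (((Finset.range k).filter (fun n => ColorAt A π n c)).card : ℤ)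

lemma cnt_zero (A : PGA V d) (π : ℕ → Option V) : cnt A π 0 = 0 := by
  funext c; simp only [cnt, Finset.range_zero, Finset.filter_empty, Finset.card_empty,
    Nat.cast_zero, Pi.zero_apply]

lemma colorAt_some {A : PGA V d} {π : ℕ → Option V} {k : ℕ} {u : V} (h : π k = some u)
    (c : Fin d) : ColorAt A π k c ↔ A.color u = c := by
  simp [ColorAt, h]

lemma cnt_succ_some (A : PGA V d) {π : ℕ → Option V} {k : ℕ} {u : V} (h : π k = some u) :
    cnt A π (k + 1) = cnt A π k + unitProf A u := by
  funext c
  simp only [cnt, Finset.range_add_one, Finset.filter_insert, Pi.add_apply, unitProf]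
  by_cases hc : A.color u = c
  · rw [if_pos ((colorAt_some h c).mpr hc), if_pos hc,
      Finset.card_insert_of_notMem (by simp)]
    push_cast; ring
  · rw [if_neg (fun hca => hc ((colorAt_some h c).mp hca)), if_neg hc]
    simp

lemma cnt_succ_none (A : PGA V d) {π : ℕ → Option V} {k : ℕ} (h : π k = none) :
    cnt A π (k + 1) = cnt A π k := by
  funext c
  simp only [cnt, Finset.range_add_one, Finset.filter_insert]
  rw [if_neg]
  rintro ⟨v, hv, -⟩
  simp [h] at hv

lemma play_none_absorb {A : PGA V d} {σ τ s π} (hπ : IsPlay A σ τ s π) {m : ℕ}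
    (h : π m = none) : ∀ k, m ≤ k → π k = none := by
  intro k hk
  induction k, hk using Nat.le_induction with
  | base => exact h
  | succ k hk ih =>
    have := hπ.2 k
    rw [ih] at this
    exact this

lemma play_shift {A : PGA V d} {σ τ s π} (hπ : IsPlay A σ τ s π) {a : ℕ} {u : V}
    (h : π a = some u) : IsPlay A σ τ u (fun n => π (a + n)) := by
  exact ⟨by simpa using h, fun n => hπ.2 (a + n)⟩

/-- Prepending a vertex to a play. -/
def consPlay (s : V) (π : ℕ → Option V) : ℕ → Option V :=
  fun n => Nat.casesOn n (some s) (fun k => π k)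

lemma isPlay_cons {A : PGA V d} {σ τ t π} (hπ : IsPlay A σ τ t π) {s : V}
    (hstep : PlayStep A σ τ (some s) (some t)) : IsPlay A σ τ s (consPlay s π) := by
  refine ⟨rfl, fun n => ?_⟩
  cases n with
  | zero =>
    show PlayStep A σ τ (some s) (π 0)
    rw [hπ.1]; exact hstep
  | succ k => exact hπ.2 k

lemma cnt_cons (A : PGA V d) (s : V) (π : ℕ → Option V) :
    ∀ k, cnt A (consPlay s π) (k + 1) = cnt A π k + unitProf A s := by
  intro k
  induction k with
  | zero =>
    rw [cnt_succ_some A (show consPlay s π 0 = some s from rfl), cnt_zero, cnt_zero,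
      zero_add]
  | succ k ih =>
    cases hπk : π k with
    | some u =>
      rw [cnt_succ_some A (show consPlay s π (k+1) = some u from hπk), ih,
        cnt_succ_some A hπk]
      abel
    | none =>
      rw [cnt_succ_none A (show consPlay s π (k+1) = none from hπk), ih,
        cnt_succ_none A hπk]

lemma playValue_of_none {A : PGA V d} {π : ℕ → Option V} {m : ℕ} (h : π m = none)
    (hmin : ∀ j, j < m → π j ≠ none) : PlayValue A π = .fin (cnt A π m) := by
  have hex : ∃ n, π n = none := ⟨m, h⟩
  have hfind : Nat.find hex = m := by
    rw [Nat.find_eq_iff]; exact ⟨h, hmin⟩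
  simp only [PlayValue, dif_pos hex, hfind]
  rfl

lemma playValue_of_botfree {A : PGA V d} {π : ℕ → Option V} (h : ∀ n, π n ≠ none) :
    PlayValue A π = if Won0B A π then Prof.top else Prof.bot := by
  have : ¬ ∃ n, π n = none := by push_neg; exact h
  simp only [PlayValue, dif_neg this]

lemma won0B_cons_iff (A : PGA V d) (s : V) (π : ℕ → Option V) :
    Won0B A (consPlay s π) ↔ Won0B A π := by
  have hc : ∀ n c, ColorAt A (consPlay s π) (n + 1) c ↔ ColorAt A π n c := fun n c => Iff.rfl
  constructor
  · rintro ⟨k, he, hinf, hfin⟩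
    refine ⟨k, he, fun N => ?_, fun j hj => ?_⟩
    · obtain ⟨n, hn, hcol⟩ := hinf (N + 1)
      obtain ⟨n', rfl⟩ : ∃ n', n = n' + 1 := ⟨n - 1, by omega⟩
      exact ⟨n', by omega, (hc n' _).mp hcol⟩
    · obtain ⟨N, hN⟩ := hfin j hj
      exact ⟨N, fun n hn => fun hcol => hN (n + 1) (by omega) ((hc n j).mpr hcol)⟩
  · rintro ⟨k, he, hinf, hfin⟩
    refine ⟨k, he, fun N => ?_, fun j hj => ?_⟩
    · obtain ⟨n, hn, hcol⟩ := hinf N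
      exact ⟨n + 1, by omega, (hc n _).mpr hcol⟩
    · obtain ⟨N, hN⟩ := hfin j hj
      refine ⟨N + 1, fun n hn => ?_⟩
      obtain ⟨n', rfl⟩ : ∃ n', n = n' + 1 := ⟨n - 1, by omega⟩
      exact fun hcol => hN n' (by omega) ((hc n' j).mp hcol)

lemma playValue_cons (A : PGA V d) {π : ℕ → Option V} {t : V} (h0 : π 0 = some t)
    (s : V) : PlayValue A (consPlay s π) = addV A s (PlayValue A π) := by
  by_cases hex : ∃ m, π m = none
  · set m := Nat.find hex with hm
    have hnone : π m = none := Nat.find_spec hex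
    have hmin : ∀ j, j < m → π j ≠ none := fun j hj => Nat.find_min hex hj
    have h1 : PlayValue A π = .fin (cnt A π m) := playValue_of_none hnone hmin
    have h2 : PlayValue A (consPlay s π) = .fin (cnt A (consPlay s π) (m + 1)) := by
      refine playValue_of_none (show consPlay s π (m+1) = none from hnone) ?_
      intro j hj
      cases j with
      | zero => simp [consPlay]
      | succ j' => exact hmin j' (by omega)
    rw [h1, h2, cnt_cons]
    simp [addV, Prof.add]
  · push_neg at hex
    have hex' : ∀ n, consPlay s π n ≠ none := by
      intro n
      cases n with
      | zero => simp [consPlay]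
      | succ k => exact hex k
    rw [playValue_of_botfree hex, playValue_of_botfree hex', won0B_cons_iff]
    by_cases hw : Won0B A π <;> simp [hw, addV, Prof.add]

/-- The play that immediately escapes to `⊥`. -/
def botPlay (s : V) : ℕ → Option V := fun n => if n = 0 then some s else none

lemma isPlay_botPlay {A : PGA V d} {σ τ} {s : V} (h0 : A.owner s = 0) (hσ : σ s none) :
    IsPlay A σ τ s (botPlay s) := by
  refine ⟨rfl, fun n => ?_⟩
  cases n with
  | zero => exact Or.inl ⟨h0, by simpa [botPlay] using hσ⟩
  | succ k => show PlayStep A σ τ none _; simp [PlayStep, botPlay]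

lemma playValue_botPlay (A : PGA V d) (s : V) :
    PlayValue A (botPlay s) = .fin (unitProf A s) := by
  have h1 : botPlay s 1 = none := rfl
  have := playValue_of_none (A := A) h1 (by intro j hj; interval_cases j; simp [botPlay])
  rw [this, cnt_succ_some A (show botPlay s 0 = some s from rfl), cnt_zero, zero_add]

lemma playExists {A : PGA V d} {σ τ} (hσ : Strategy0 A σ) (hτ : Strategy1 A τ) (s : V) :
    ∃ π, IsPlay A σ τ s π := by
  have htot : ∀ x : Option V, ∃ y, PlayStep A σ τ x y := by
    intro x
    cases x with
    | none => exact ⟨none, rfl⟩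
    | some u =>
      rcases owner_cases (A.owner u) with h | h
      · obtain ⟨t, ht⟩ := hσ.2 u h
        exact ⟨t, Or.inl ⟨h, ht⟩⟩
      · obtain ⟨t, ht⟩ := hτ.2 u h
        exact ⟨some t, Or.inr ⟨h, t, rfl, ht⟩⟩
  choose F hF using htot
  refine ⟨fun n => F^[n] (some s), by simp, fun n => ?_⟩
  show PlayStep A σ τ (F^[n] (some s)) (F^[n + 1] (some s))
  rw [Function.iterate_succ_apply']
  exact hF _

end PlayAux

/-! ### Looping a repeated vertex, and infinite plays under reasonable strategies -/

section LoopAux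
variable {V : Type} {d : ℕ}

lemma nat_mod_succ {m p : ℕ} (hp : 0 < p) :
    (m + 1) % p = if m % p + 1 = p then 0 else m % p + 1 := by
  conv_lhs => rw [← Nat.div_add_mod m p, Nat.add_assoc, Nat.mul_add_mod]
  by_cases h : m % p + 1 = p
  · simp [h]
  · have : m % p < p := Nat.mod_lt _ hp
    rw [if_neg h, Nat.mod_eq_of_lt (by omega)]

lemma loopPlay {A : PGA V d} {σ τ s π} (hπ : IsPlay A σ τ s π) {a b : ℕ} (hab : a < b)
    (heq : π a = π b) (hsome : ∀ j, j ≤ b → π j ≠ none) :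
    ∃ ρ, IsPlay A σ τ s ρ ∧ ∀ n, ρ n ≠ none := by
  set p := b - a with hp
  have hp0 : 0 < p := by omega
  set ρ : ℕ → Option V := fun n => if n < b then π n else π (a + (n - a) % p) with hρ
  have hmem : ∀ n, ∃ j, j ≤ b ∧ ρ n = π j := by
    intro n
    by_cases h : n < b
    · exact ⟨n, by omega, by simp [hρ, h]⟩
    · refine ⟨a + (n - a) % p, ?_, by simp [hρ, h]⟩
      have := Nat.mod_lt (n - a) hp0
      omega
  have hstep : ∀ n, PlayStep A σ τ (ρ n) (ρ (n + 1)) := by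
    intro n
    rcases lt_trichotomy (n + 1) b with h | h | h
    · have h' : n < b := by omega
      simp only [hρ, if_pos h, if_pos h']
      exact hπ.2 n
    · have h' : n < b := by omega
      have e1 : (n + 1 - a) % p = 0 := by
        have e2 : n + 1 - a = p := by omega
        simp [e2]
      have hρ1 : ρ (n + 1) = π a := by
        simp only [hρ, if_neg (by omega : ¬ n + 1 < b), e1, Nat.add_zero]
      have hρ0 : ρ n = π n := by simp only [hρ, if_pos h']
      rw [hρ0, hρ1, heq, ← h]
      exact hπ.2 n
    · -- n + 1 > b, so n ≥ b
      have hn : ¬ n < b := by omega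
      have hn1 : ¬ n + 1 < b := by omega
      set r := (n - a) % p with hr
      have hrlt : r < p := Nat.mod_lt _ hp0
      have hsucc : n + 1 - a = (n - a) + 1 := by omega
      have hmod : (n + 1 - a) % p = if r + 1 = p then 0 else r + 1 := by
        rw [hsucc, nat_mod_succ hp0, ← hr]
      have hρ0 : ρ n = π (a + r) := by simp only [hρ, if_neg hn, hr]
      by_cases hcase : r + 1 = p
      · have hρ1 : ρ (n + 1) = π a := by
          simp only [hρ, if_neg hn1, hmod, if_pos hcase, Nat.add_zero]
        have hstep' := hπ.2 (a + r)
        have hab' : a + r + 1 = b := by omega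
        rw [hab'] at hstep'
        rw [hρ0, hρ1, heq]
        exact hstep'
      · have hρ1 : ρ (n + 1) = π (a + r + 1) := by
          simp only [hρ, if_neg hn1, hmod, if_neg hcase, ← Nat.add_assoc]
        rw [hρ0, hρ1]
        exact hπ.2 (a + r)
  refine ⟨ρ, ⟨?_, hstep⟩, fun n => ?_⟩
  · simp only [hρ, if_pos (show 0 < b by omega)]
    exact hπ.1
  · obtain ⟨j, hj, he⟩ := hmem n
    rw [he]; exact hsome j hj

lemma value_top_of_botfree [Fintype V] {A : PGA V d} {σ : V → Option V → Prop}
    (hreas : Reasonable A σ) {π : ℕ → Option V} (hbf : ∀ n, π n ≠ none)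
    (hsteps : ∀ n u v, π n = some u → π (n + 1) = some v → EdgeSig A σ u v) :
    PlayValue A π = Prof.top := by
  -- extract the vertex sequence
  have hg : ∀ n, ∃ u, π n = some u := by
    intro n
    cases h : π n with
    | none => exact absurd h (hbf n)
    | some u => exact ⟨u, rfl⟩
  choose g hgs using hg
  have hEdge : ∀ n, EdgeSig A σ (g n) (g (n + 1)) := fun n => hsteps n _ _ (hgs n) (hgs (n + 1))
  -- recurring vertices
  set R : Set V := {v | ∀ N, ∃ n, N ≤ n ∧ g n = v} with hR
  have hRne : R.Nonempty := by
    obtain ⟨v, hv⟩ := Finite.exists_infinite_fiber g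
    refine ⟨v, fun N => ?_⟩
    have hinf : (g ⁻¹' {v}).Infinite := Set.infinite_coe_iff.mp hv
    obtain ⟨n, hn, hlt⟩ := hinf.exists_gt N
    exact ⟨n, hlt.le, hn⟩
  obtain ⟨vm, hvmR, hmax'⟩ := Set.Finite.exists_maximalFor A.color R (Set.toFinite R) hRne
  have hmax : ∀ w ∈ R, A.color w ≤ A.color vm := by
    intro w hw
    rcases le_total (A.color w) (A.color vm) with h | h
    · exact h
    · exact hmax' hw h
  -- a bound beyond which only recurring vertices appear
  have hBfin : {n | g n ∉ R}.Finite := by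
    have hfib : ∀ v : V, v ∉ R → (g ⁻¹' {v}).Finite := by
      intro v hv
      simp only [hR, Set.mem_setOf_eq, not_forall] at hv
      obtain ⟨N, hN⟩ := hv
      push_neg at hN
      refine Set.Finite.subset (Set.finite_Iio N) ?_
      intro n hn
      simp only [Set.mem_preimage, Set.mem_singleton_iff] at hn
      by_contra hcon
      exact hN n (by simpa using hcon) hn
    have : {n | g n ∉ R} ⊆ ⋃ v ∈ (Rᶜ : Set V), g ⁻¹' {v} := by
      intro n hn
      simp only [Set.mem_iUnion, Set.mem_preimage, Set.mem_singleton_iff]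
      exact ⟨g n, hn, rfl⟩
    exact Set.Finite.subset (Set.Finite.biUnion (Set.toFinite _) (fun v hv => hfib v hv)) this
  obtain ⟨N0, hN0⟩ := hBfin.bddAbove
  have hrec : ∀ n, N0 < n → g n ∈ R := by
    intro n hn
    by_contra hcon
    exact absurd (hN0 hcon) (by omega)
  set k := A.color vm with hk
  -- the cycle between two occurrences of vm
  obtain ⟨a, ha1, ha2⟩ := hvmR (N0 + 1)
  obtain ⟨b, hb1, hb2⟩ := hvmR (a + 1)
  have hab : a < b := by omega
  have hN0a : N0 < a := by omega
  set L : List V := (List.range (b - a)).map (fun j => g (a + j)) with hL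
  have hLlen : L.length = b - a := by simp [hL]
  have hLget : ∀ (i : ℕ) (h : i < L.length), L.get ⟨i, h⟩ = g (a + i) := by
    intro i h
    simp [hL]
  have hcyc : CycleIn A σ L := by
    refine ⟨by simp [hL]; omega, ?_, ?_⟩
    · refine List.isChain_iff_getElem.mpr ?_
      intro i h
      rw [show L[i] = g (a + i) by simp [hL], show L[i+1] = g (a + (i + 1)) by simp [hL]]
      have : a + (i + 1) = (a + i) + 1 := by omega
      rw [this]
      exact hEdge (a + i)
    · intro x y hx hy
      obtain ⟨m, hm⟩ : ∃ m, b - a = m + 1 := ⟨b - a - 1, by omega⟩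
      have hhead : L.head? = some (g (a + 0)) := by
        rw [hL, hm, List.range_succ_eq_map, List.map_cons]
        rfl
      have hlast : L.getLast? = some (g (a + m)) := by
        rw [hL, hm, List.range_succ, List.map_append]
        exact List.getLast?_concat
      rw [hhead] at hx
      rw [hlast] at hy
      obtain rfl : x = g (a + 0) := (Option.some_injective _ hx).symm
      obtain rfl : y = g (a + m) := (Option.some_injective _ hy).symm
      have e1 : a + m + 1 = b := by omega
      have h2 := hEdge (a + m)
      rw [e1] at h2
      rw [Nat.add_zero]
      rwa [hb2, ← ha2] at h2
  have hmem_color : ∀ w ∈ L, A.color w ≤ k := by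
    intro w hw
    simp only [hL, List.mem_map, List.mem_range] at hw
    obtain ⟨j, hj, rfl⟩ := hw
    exact hmax _ (hrec (a + j) (by omega))
  have hvmL : vm ∈ L := by
    simp only [hL, List.mem_map, List.mem_range]
    exact ⟨0, by omega, by rw [Nat.add_zero]; exact ha2⟩
  have heven : Even ((k : ℕ)) := hreas L hcyc vm hvmL (by
    intro w hw; exact hmem_color w hw)
  -- the winning condition
  have hwon : Won0B A π := by
    refine ⟨k, heven, fun N => ?_, fun j hj => ?_⟩
    · obtain ⟨n, hn, hgn⟩ := hvmR N
      exact ⟨n, hn, ⟨g n, hgs n, by rw [hgn]⟩⟩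
    · refine ⟨N0 + 1, fun n hn => ?_⟩
      rintro ⟨v, hv, hcol⟩
      have hvg : v = g n := by rw [hgs n] at hv; exact (Option.some_injective _ hv).symm
      have : A.color (g n) ≤ k := hmax _ (hrec n (by omega))
      rw [← hvg, hcol] at this
      exact absurd this (not_le.mpr hj)
  rw [playValue_of_botfree hbf, if_pos hwon]

lemma edgeSig_of_playStep {A : PGA V d} {σ τ} (hτ : Strategy1 A τ) {u v : V}
    (h : PlayStep A σ τ (some u) (some v)) : EdgeSig A σ u v := by
  rcases h with ⟨h0, hσ'⟩ | ⟨h1, w, hw, hτ'⟩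
  · exact Or.inr hσ'
  · obtain rfl : v = w := Option.some_injective _ hw
    exact Or.inl ⟨h1, (hτ.1 u v hτ').2⟩

lemma play_repeat [Fintype V] {π : ℕ → Option V}
    (hsome : ∀ j, j ≤ Fintype.card V → π j ≠ none) :
    ∃ a b, a < b ∧ b ≤ Fintype.card V ∧ π a = π b := by
  set n := Fintype.card V with hn
  have hex : ∀ j : Fin (n + 1), ∃ u, π j.val = some u := by
    intro j
    cases h : π j.val with
    | none => exact absurd h (hsome j.val (by omega))
    | some u => exact ⟨u, rfl⟩
  choose f hf using hex
  have hcard : Fintype.card V < Fintype.card (Fin (n + 1)) := by simp [hn]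
  obtain ⟨x, y, hxy, hfeq⟩ := Fintype.exists_ne_map_eq_of_card_lt f hcard
  have hπeq : π x.val = π y.val := by rw [hf x, hf y, hfeq]
  rcases lt_or_gt_of_ne (fun h => hxy (Fin.ext h) : x.val ≠ y.val) with h | h
  · exact ⟨x.val, y.val, h, by omega, hπeq⟩
  · exact ⟨y.val, x.val, h, by omega, hπeq.symm⟩

lemma exists_max_finset (F : Finset (Prof d)) (hne : F.Nonempty) :
    ∃ m ∈ F, ∀ q ∈ F, Prof.Le q m := by
  induction F using Finset.induction_on with
  | empty => exact absurd hne (by simp)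
  | @insert a F' ha ih =>
    rcases F'.eq_empty_or_nonempty with rfl | hne'
    · exact ⟨a, by simp, by simp [ple_refl]⟩
    · obtain ⟨m, hm, hub⟩ := ih hne'
      rcases ple_total a m with h | h
      · refine ⟨m, by simp [hm], ?_⟩
        intro q hq
        rcases Finset.mem_insert.mp hq with rfl | hq'
        · exact h
        · exact hub q hq'
      · refine ⟨a, by simp, ?_⟩
        intro q hq
        rcases Finset.mem_insert.mp hq with rfl | hq'
        · exact ple_refl _
        · exact ple_trans (hub q hq') h

lemma exists_max_set (S : Set (Prof d)) (hfin : S.Finite) (hne : S.Nonempty) :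
    ∃ m ∈ S, ∀ q ∈ S, Prof.Le q m := by
  obtain ⟨m, hm, hub⟩ := exists_max_finset hfin.toFinset (by simpa using hne)
  exact ⟨m, by simpa using hm, fun q hq => hub q (by simpa using hq)⟩

lemma max_exists [Fintype V] {A : PGA V d} {σ τ} (hσ : Strategy0 A σ) (hτ : Strategy1 A τ)
    (hreas : Reasonable A σ) (s : V) :
    ∃ M, IsMaxOf {q | ∃ π, IsPlay A σ τ s π ∧ q = PlayValue A π} M := by
  set n := Fintype.card V with hn
  by_cases hbf : ∃ π, IsPlay A σ τ s π ∧ ∀ m, π m ≠ none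
  · obtain ⟨π, hπ, hπbf⟩ := hbf
    have htop : PlayValue A π = Prof.top :=
      value_top_of_botfree hreas hπbf (fun n u v hu hv => by
        have := hπ.2 n
        rw [hu, hv] at this
        exact edgeSig_of_playStep hτ this)
    exact ⟨Prof.top, ⟨π, hπ, htop.symm⟩, fun q _ => ple_top q⟩
  · push_neg at hbf
    -- every play reaches ⊥ within n steps
    have hhit : ∀ π, IsPlay A σ τ s π → ∃ j, j ≤ n ∧ π j = none := by
      intro π hπ
      by_contra hcon
      push_neg at hcon
      have hsome : ∀ j, j ≤ n → π j ≠ none := fun j hj => hcon j hj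
      obtain ⟨a, b, hab, hbn, heq⟩ := play_repeat hsome
      obtain ⟨ρ, hρ, hρbf⟩ := loopPlay hπ hab heq (fun j hj => hsome j (by omega))
      exact absurd (hρbf) (by simpa using hbf ρ hρ)
    -- truncation: the set of play values is finite
    set gtr : (Fin (n + 1) → Option V) → Prof d :=
      fun f => PlayValue A (fun m => if h : m < n + 1 then f ⟨m, h⟩ else none) with hgtr
    have hsub : {q | ∃ π, IsPlay A σ τ s π ∧ q = PlayValue A π} ⊆ Set.range gtr := by
      rintro q ⟨π, hπ, rfl⟩
      refine ⟨fun j => π j.val, ?_⟩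
      show PlayValue A (fun m => if h : m < n + 1 then π m else none) = PlayValue A π
      refine congrArg (PlayValue A) (funext fun m => ?_)
      by_cases h : m < n + 1
      · simp [h]
      · obtain ⟨j, hj, hjn⟩ := hhit π hπ
        rw [dif_neg h]
        exact (play_none_absorb hπ hjn m (by omega)).symm
    have hfin : {q | ∃ π, IsPlay A σ τ s π ∧ q = PlayValue A π}.Finite :=
      Set.Finite.subset (Set.finite_range gtr) hsub
    have hne : {q | ∃ π, IsPlay A σ τ s π ∧ q = PlayValue A π}.Nonempty := by
      obtain ⟨π, hπ⟩ := playExists hσ hτ s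
      exact ⟨PlayValue A π, π, hπ, rfl⟩
    obtain ⟨m, hm, hub⟩ := exists_max_set _ hfin hne
    exact ⟨m, hm, hub⟩

/-! ### Properties of the Bellman-Ford iteration -/

variable {A : PGA V d} {σ : V → Option V → Prop} {W : ℕ → Option V → Prof d}

lemma wnone (h0bot : W 0 none = .fin 0) (hstep : ∀ i, IsStep A σ (W i) (W (i + 1))) :
    ∀ i, W i none = .fin 0 := by
  intro i
  cases i with
  | zero => exact h0bot
  | succ i => exact (hstep i).1

lemma wnotbot (h0bot : W 0 none = .fin 0) (h0 : ∀ s : V, W 0 (some s) = .top)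
    (hstep : ∀ i, IsStep A σ (W i) (W (i + 1))) : ∀ i x, W i x ≠ .bot := by
  intro i
  induction i with
  | zero =>
    intro x
    cases x with
    | none => rw [h0bot]; simp
    | some s => rw [h0 s]; simp
  | succ i ih =>
    intro x
    cases x with
    | none => rw [(hstep i).1]; simp
    | some s =>
      rcases owner_cases (A.owner s) with h | h
      · obtain ⟨m, hmax, he⟩ := ((hstep i).2 s).2 h
        obtain ⟨t, hσt, hmt⟩ := hmax.1
        rw [he]
        exact padd_ne_bot (hmt ▸ ih t) _
      · obtain ⟨m, hmin, he⟩ := ((hstep i).2 s).1 h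
        obtain ⟨t, het, hmt⟩ := hmin.1
        rw [he]
        exact padd_ne_bot (hmt ▸ ih (some t)) _

lemma wdec (h0bot : W 0 none = .fin 0) (h0 : ∀ s : V, W 0 (some s) = .top)
    (hstep : ∀ i, IsStep A σ (W i) (W (i + 1))) :
    ∀ i x, Prof.Le (W (i + 1) x) (W i x) := by
  intro i
  induction i with
  | zero =>
    intro x
    cases x with
    | none => rw [(hstep 0).1, h0bot]; exact ple_refl _
    | some s => rw [h0 s]; exact ple_top _
  | succ i ih =>
    intro x
    cases x with
    | none => rw [(hstep (i + 1)).1, (hstep i).1]; exact ple_refl _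
    | some s =>
      rcases owner_cases (A.owner s) with h | h
      · obtain ⟨m, hmax, he⟩ := ((hstep i).2 s).2 h
        obtain ⟨m', hmax', he'⟩ := ((hstep (i + 1)).2 s).2 h
        rw [he, he']
        obtain ⟨t0, hσ0, hm'⟩ := hmax'.1
        have h1 : Prof.Le m' m :=
          ple_trans (hm' ▸ ih t0) (hmax.2 _ ⟨t0, hσ0, rfl⟩)
        exact padd_mono _ h1
      · obtain ⟨m, hmin, he⟩ := ((hstep i).2 s).1 h
        obtain ⟨m', hmin', he'⟩ := ((hstep (i + 1)).2 s).1 h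
        rw [he, he']
        obtain ⟨t0, het0, hm⟩ := hmin.1
        have h1 : Prof.Le m' m :=
          ple_trans (hmin'.2 _ ⟨t0, het0, rfl⟩) (hm ▸ ih (some t0))
        exact padd_mono _ h1

lemma tele {τ : V → V → Prop} {i : ℕ}
    (hkey : ∀ u y, PlayStep A σ τ (some u) y → Prof.Le (addV A u (W i y)) (W i (some u)))
    {s : V} {π : ℕ → Option V} (hπ : IsPlay A σ τ s π) :
    ∀ k, Prof.Le ((W i (π k)).add (cnt A π k)) (W i (some s)) := by
  intro k
  induction k with
  | zero => rw [hπ.1, cnt_zero, padd_zero]; exact ple_refl _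
  | succ k ih =>
    cases hπk : π k with
    | none =>
      have hnext : π (k + 1) = none := by
        have h := hπ.2 k
        rw [hπk] at h
        exact h
      rw [hnext, cnt_succ_none A hπk]
      rw [hπk] at ih
      exact ih
    | some u =>
      have hnext := hπ.2 k
      rw [hπk] at hnext
      have hk := hkey u (π (k + 1)) hnext
      rw [cnt_succ_some A hπk]
      have e1 : (W i (π (k + 1))).add (cnt A π k + unitProf A u)
          = (addV A u (W i (π (k + 1)))).add (cnt A π k) := by
        rw [addV, padd_padd, add_comm (cnt A π k)]
      rw [e1]
      rw [hπk] at ih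
      exact ple_trans (padd_mono _ hk) ih

lemma cycle_pos (hreas : Reasonable A σ) (g : ℕ → V) (q : ℕ) (hq : 0 < q)
    (hsteps : ∀ j, j < q → EdgeSig A σ (g j) (g (j + 1))) (hwrap : g q = g 0) :
    FinLt (0 : Fin d → ℤ)
      (fun c => (((Finset.range q).filter (fun j => A.color (g j) = c)).card : ℤ)) := by
  set L : List V := (List.range q).map g with hL
  have hLlen : L.length = q := by simp [hL]
  have hcyc : CycleIn A σ L := by
    refine ⟨by simp [hL]; omega, ?_, ?_⟩
    · refine List.isChain_iff_getElem.mpr ?_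
      intro i h
      have h1 : L[i] = g i := by simp [hL]
      have h2 : L[i + 1] = g (i + 1) := by simp [hL]
      rw [h1, h2]
      exact hsteps i (by omega)
    · intro x y hx hy
      obtain ⟨m, hm⟩ : ∃ m, q = m + 1 := ⟨q - 1, by omega⟩
      have hhead : L.head? = some (g 0) := by
        rw [hL, hm, List.range_succ_eq_map, List.map_cons]
        rfl
      have hlast : L.getLast? = some (g m) := by
        rw [hL, hm, List.range_succ, List.map_append]
        exact List.getLast?_concat
      rw [hhead] at hx
      rw [hlast] at hy
      obtain rfl : x = g 0 := (Option.some_injective _ hx).symm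
      obtain rfl : y = g m := (Option.some_injective _ hy).symm
      have h2 := hsteps m (by omega)
      rw [← hm] at h2
      rwa [hwrap] at h2
  obtain ⟨j0, hj0, hmax⟩ := Finset.exists_max_image (Finset.range q) (fun j => A.color (g j))
    ⟨0, by simp [hq]⟩
  set k := A.color (g j0) with hk
  have heven : Even ((k : ℕ)) := by
    refine hreas L hcyc (g j0) ?_ ?_
    · simp only [hL, List.mem_map, List.mem_range]
      exact ⟨j0, by simpa using hj0, rfl⟩
    · intro w hw
      simp only [hL, List.mem_map, List.mem_range] at hw
      obtain ⟨j, hj, rfl⟩ := hw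
      exact hmax j (by simpa using hj)
  have hpos : 0 < (((Finset.range q).filter (fun j => A.color (g j) = k)).card : ℤ) := by
    have : j0 ∈ (Finset.range q).filter (fun j => A.color (g j) = k) :=
      Finset.mem_filter.mpr ⟨hj0, rfl⟩
    have := Finset.card_pos.mpr ⟨j0, this⟩
    exact_mod_cast this
  refine ⟨k, by simpa using ne_of_lt hpos, ?_, Or.inl ⟨heven, by simpa using hpos⟩⟩
  intro j hj
  simp only [Pi.zero_apply]
  have : (Finset.range q).filter (fun n => A.color (g n) = j) = ∅ := by
    rw [Finset.filter_eq_empty_iff]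
    intro x hx hcol
    have := hmax x hx
    rw [hcol] at this
    exact absurd this (not_le.mpr hj)
  rw [this]
  simp

lemma play_le [Fintype V] (hreas : Reasonable A σ) {τ : V → V → Prop} {i : ℕ}
    (hτ : Strategy1 A τ)
    (hkey : ∀ u y, PlayStep A σ τ (some u) y → Prof.Le (addV A u (W i y)) (W i (some u)))
    (hWnone : W i none = .fin 0) (hnb : ∀ x, W i x ≠ .bot)
    {s : V} {π : ℕ → Option V} (hπ : IsPlay A σ τ s π) :
    Prof.Le (PlayValue A π) (W i (some s)) := by
  by_cases hex : ∃ m, π m = none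
  · have hval := playValue_of_none (A := A) (Nat.find_spec hex) (fun j hj => Nat.find_min hex hj)
    have ht := tele hkey hπ (Nat.find hex)
    rw [Nat.find_spec hex, hWnone] at ht
    have he : (Prof.fin (0 : Fin d → ℤ)).add (cnt A π (Nat.find hex))
        = .fin (cnt A π (Nat.find hex)) := by
      show Prof.fin _ = _
      rw [zero_add]
    rw [he] at ht
    rw [hval]
    exact ht
  · push_neg at hex
    obtain ⟨a, b, hab, hbn, heq⟩ := play_repeat (fun j _ => hex j)
    have hgex : ∀ n, ∃ w, π n = some w := by
      intro n
      cases h : π n with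
      | none => exact absurd h (hex n)
      | some w => exact ⟨w, rfl⟩
    choose g hg using hgex
    have hu : π a = some (g a) := hg a
    have hπ' := play_shift hπ hu
    cases htop : W i (some (g a)) with
    | bot => exact absurd htop (hnb _)
    | top =>
      have ht := tele hkey hπ a
      rw [hu, htop] at ht
      have : Prof.Le Prof.top (W i (some s)) := ht
      rw [top_ple this]
      exact ple_top _
    | fin v =>
      exfalso
      set q := b - a with hq
      have ht := tele hkey hπ' q
      have he2 : π (a + q) = some (g a) := by
        rw [show a + q = b by omega, ← heq]
        exact hu
      rw [he2, htop] at ht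
      set C := cnt A (fun n => π (a + n)) q with hC
      have hCeq : C = fun c =>
          (((Finset.range q).filter (fun j => A.color (g (a + j)) = c)).card : ℤ) := by
        funext c
        simp only [hC, cnt]
        congr 1
        refine congrArg Finset.card (Finset.filter_congr ?_)
        intro j _
        exact colorAt_some (hg (a + j)) c
      have hCpos : FinLt (0 : Fin d → ℤ) C := by
        rw [hCeq]
        refine cycle_pos hreas (fun j => g (a + j)) q (by omega) ?_ ?_
        · intro j hj
          have hs := hπ.2 (a + j)
          rw [hg (a + j), show a + j + 1 = a + (j + 1) by omega, hg (a + (j + 1))] at hs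
          exact edgeSig_of_playStep hτ hs
        · show g (a + q) = g (a + 0)
          rw [show a + q = b by omega, Nat.add_zero]
          have : some (g b) = some (g a) := by rw [← hg b, ← hg a, heq]
          exact Option.some_injective _ this
      have hlt := plt_fin_add (v := v) hCpos
      have hle2 : Prof.Le (Prof.fin (v + C)) (Prof.fin v) := ht
      have := ple_antisymm hle2 (ple_of_lt hlt)
      rw [← this] at hlt
      exact plt_irrefl _ hlt

lemma gg_lemma [Fintype V] (hσ : Strategy0 A σ) (h0bot : W 0 none = .fin 0)
    (hstep : ∀ i, IsStep A σ (W i) (W (i + 1))) {τ : V → V → Prop} (hτ : Strategy1 A τ) :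
    ∀ i (s : V), (∃ π, IsPlay A σ τ s π ∧ ∀ j, j ≤ i → π j ≠ none) ∨
      (∃ π, IsPlay A σ τ s π ∧ Prof.Le (W i (some s)) (PlayValue A π)) := by
  intro i
  induction i with
  | zero =>
    intro s
    obtain ⟨π, hπ⟩ := playExists hσ hτ s
    refine Or.inl ⟨π, hπ, fun j hj => ?_⟩
    interval_cases j
    rw [hπ.1]
    simp
  | succ i ih =>
    intro s
    rcases owner_cases (A.owner s) with h | h
    · obtain ⟨m, hmax, he⟩ := ((hstep i).2 s).2 h
      obtain ⟨t0, hσ0, hm⟩ := hmax.1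
      cases t0 with
      | none =>
        right
        refine ⟨botPlay s, isPlay_botPlay h hσ0, ?_⟩
        have hval : addV A s m = .fin (unitProf A s) := by
          rw [hm, wnone h0bot hstep i]
          show Prof.fin _ = _
          rw [zero_add]
        rw [playValue_botPlay, he, hval]
        exact ple_refl _
      | some t =>
        rcases ih t with ⟨ρ, hρ, hbf⟩ | ⟨ρ, hρ, hle⟩
        · left
          refine ⟨consPlay s ρ, isPlay_cons hρ (Or.inl ⟨h, hσ0⟩), ?_⟩
          intro j hj
          cases j with
          | zero => simp [consPlay]
          | succ j' => exact hbf j' (by omega)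
        · right
          refine ⟨consPlay s ρ, isPlay_cons hρ (Or.inl ⟨h, hσ0⟩), ?_⟩
          rw [playValue_cons A hρ.1 s, he, hm]
          exact padd_mono _ hle
    · obtain ⟨t, hτt⟩ := hτ.2 s h
      obtain ⟨m, hmin, he⟩ := ((hstep i).2 s).1 h
      have hstept : PlayStep A σ τ (some s) (some t) := Or.inr ⟨h, t, rfl, hτt⟩
      rcases ih t with ⟨ρ, hρ, hbf⟩ | ⟨ρ, hρ, hle⟩
      · left
        refine ⟨consPlay s ρ, isPlay_cons hρ hstept, ?_⟩
        intro j hj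
        cases j with
        | zero => simp [consPlay]
        | succ j' => exact hbf j' (by omega)
      · right
        refine ⟨consPlay s ρ, isPlay_cons hρ hstept, ?_⟩
        rw [playValue_cons A hρ.1 s, he]
        have h1 : Prof.Le m (W i (some t)) := hmin.2 _ ⟨t, (hτ.1 s t hτt).2, rfl⟩
        exact ple_trans (padd_mono _ h1) (padd_mono _ hle)

end LoopAux
/-- **Lemma 2.** For a reasonable strategy `σ`, the valuation `𝒱_σ` is the
limit of the decreasing sequence `F_σ^i[𝒱_⊥]` (with `𝒱_⊥(⊥) = ō`, `𝒱_⊥(s) = ∞`), and the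
limit is reached after at most `|V|` iterations. -/
theorem valuation_is_bellman_ford_limit {V : Type} {d : ℕ} [Fintype V] (A : PGA V d)
    (σ : V → Option V → Prop) (Vσ : Option V → Prof d)
    (hσ : Strategy0 A σ) (hreas : Reasonable A σ) (hV : IsValuation A σ Vσ)
    (W : ℕ → Option V → Prof d)
    (h0bot : W 0 none = .fin 0) (h0 : ∀ s : V, W 0 (some s) = .top)
    (hstep : ∀ i, IsStep A σ (W i) (W (i + 1))) :
    (∀ i x, Prof.Le (W (i + 1) x) (W i x)) ∧
    (∀ i, Fintype.card V ≤ i → ∀ x, W i x = Vσ x) := by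
  have hWnone := wnone h0bot hstep
  have hdec := wdec h0bot h0 hstep
  have hnb := wnotbot h0bot h0 hstep
  refine ⟨hdec, ?_⟩
  intro i hi x
  -- direction 1 : Vσ ≼ W i (holds for every i)
  have hdir1 : ∀ s : V, Prof.Le (Vσ (some s)) (W i (some s)) := by
    intro s
    set τi : V → V → Prop := fun u v => A.owner u = 1 ∧ A.edge u v ∧
      ∀ t, A.edge u t → Prof.Le (W i (some v)) (W i (some t)) with hτi
    have hτistrat : Strategy1 A τi := by
      constructor
      · exact fun u v hv => ⟨hv.1, hv.2.1⟩
      · intro u hu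
        obtain ⟨m, hmin, he⟩ := ((hstep i).2 u).1 hu
        obtain ⟨t1, het1, hmt1⟩ := hmin.1
        refine ⟨t1, hu, het1, fun t het => ?_⟩
        rw [← hmt1]
        exact hmin.2 _ ⟨t, het, rfl⟩
    have hkey : ∀ u y, PlayStep A σ τi (some u) y →
        Prof.Le (addV A u (W i y)) (W i (some u)) := by
      intro u y hstep'
      have hstep'' : (A.owner u = 0 ∧ σ u y) ∨
          (A.owner u = 1 ∧ ∃ v, y = some v ∧ τi u v) := hstep'
      rcases hstep'' with ⟨h0', hσ'⟩ | ⟨h1', v, rfl, hτ'⟩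
      · obtain ⟨m, hmax, he⟩ := ((hstep i).2 u).2 h0'
        have h2 : Prof.Le (W i y) m := hmax.2 _ ⟨y, hσ', rfl⟩
        have h3 : Prof.Le (addV A u (W i y)) (W (i + 1) (some u)) := by
          rw [he]
          exact padd_mono _ h2
        exact ple_trans h3 (hdec i (some u))
      · obtain ⟨m, hmin, he⟩ := ((hstep i).2 u).1 h1'
        obtain ⟨t1, het1, hmt1⟩ := hmin.1
        have h2 : Prof.Le (W i (some v)) m := hmt1 ▸ hτ'.2.2 t1 het1
        have h3 : Prof.Le (addV A u (W i (some v))) (W (i + 1) (some u)) := by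
          rw [he]
          exact padd_mono _ h2
        exact ple_trans h3 (hdec i (some u))
    obtain ⟨M, hM⟩ := max_exists hσ hτistrat hreas s
    have h1 : Prof.Le (Vσ (some s)) M := (hV.2 s).2 M ⟨τi, hτistrat, hM⟩
    obtain ⟨π, hπ, hMv⟩ := hM.1
    have h2 := play_le hreas hτistrat hkey (hWnone i) (hnb i) hπ
    exact ple_trans h1 (hMv ▸ h2)
  -- direction 2 : W i ≼ Vσ (needs i ≥ |V|)
  have hdir2 : ∀ s : V, Prof.Le (W i (some s)) (Vσ (some s)) := by
    intro s
    obtain ⟨τ, hτ, hmaxτ⟩ := (hV.2 s).1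
    rcases gg_lemma hσ h0bot hstep hτ i s with ⟨π, hπ, hbf⟩ | ⟨π, hπ, hle⟩
    · have hsome : ∀ j, j ≤ Fintype.card V → π j ≠ none :=
        fun j hj => hbf j (le_trans hj hi)
      obtain ⟨a, b, hab, hbn, heq⟩ := play_repeat hsome
      obtain ⟨ρ, hρ, hρbf⟩ := loopPlay hπ hab heq (fun j hj => hsome j (le_trans hj hbn))
      have htopval : PlayValue A ρ = Prof.top :=
        value_top_of_botfree hreas hρbf (fun n u v hu hv => by
          have hs := hρ.2 n
          rw [hu, hv] at hs
          exact edgeSig_of_playStep hτ hs)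
      have htop : Prof.Le Prof.top (Vσ (some s)) :=
        hmaxτ.2 _ ⟨ρ, hρ, htopval.symm⟩
      rw [top_ple htop]
      exact ple_top _
    · exact ple_trans hle (hmaxτ.2 _ ⟨π, hπ, rfl⟩)
  cases x with
  | none => rw [hWnone i, hV.1]
  | some s => exact ple_antisymm (hdir2 s) (hdir1 s)
end
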